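/- arXiv:2405.12524 — 5 statements merged into one kernel-verified Lean document; each statement's English description precedes it below -/
import Mathlib

section
/- Let E be a finite-dimensional real normed vector space, L : E → E a continuous linear map with operator norm ‖L‖ ≤ Λ, and Δt > 0 such that A := id − Δt·L is invertible with ‖A⁻¹‖ ≤ κ₁. Suppose F̃ₚ, F̃, Fₚ, F', Q̃, Q, R ∈ E satisfy: (i) the exact Crank–Nicolson Leap-Frog relation A F̃ = (id + Δt·L) F̃ₚ + 2Δt Q̃; (ii) the recompression residual bound ‖R − ((id + Δt·L) Fₚ + 2Δt Q)‖ ≤ ε_b; (iii) the inexact-solver residual bound ‖A F' − R‖ ≤ ε_d. Then ‖F̃ − F'‖ ≤ ‖F̃ₚ − Fₚ‖ + 2Δt κ₁ (Λ ‖F̃ₚ − Fₚ‖ + ‖Q̃ − Q‖) + κ₁ (ε_b + ε_d). -/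
/-- One-step error-propagation estimate for the APTT method applied to the CNLF
discretization of the Boltzmann-BGK equation. -/
theorem aptt_one_step_error
    {E : Type*} [NormedAddCommGroup E] [NormedSpace ℝ E] [FiniteDimensional ℝ E]
    (L A B : E →L[ℝ] E) (Λ κ₁ Δt εb εd : ℝ)
    (hΛ : ‖L‖ ≤ Λ) (hΔt : 0 < Δt)
    (hA : A = ContinuousLinearMap.id ℝ E - Δt • L)
    (hBA : B.comp A = ContinuousLinearMap.id ℝ E)
    (hAB : A.comp B = ContinuousLinearMap.id ℝ E)
    (hκ₁ : ‖B‖ ≤ κ₁)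
    (Ftp Fte Fp F' Qt Q R : E)
    (hexact : A Fte = (ContinuousLinearMap.id ℝ E + Δt • L) Ftp + (2 * Δt) • Qt)
    (hrec : ‖R - ((ContinuousLinearMap.id ℝ E + Δt • L) Fp + (2 * Δt) • Q)‖ ≤ εb)
    (hsolve : ‖A F' - R‖ ≤ εd) :
    ‖Fte - F'‖ ≤ ‖Ftp - Fp‖ + 2 * Δt * κ₁ * (Λ * ‖Ftp - Fp‖ + ‖Qt - Q‖)
      + κ₁ * (εb + εd) := by
  have hB : ∀ x, B (A x) = x := by
    intro x
    rw [← ContinuousLinearMap.comp_apply, hBA]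
    rfl
  set u := Ftp - Fp with hu
  set W1 := ((ContinuousLinearMap.id ℝ E + Δt • L) Fp + (2 * Δt) • Q) - R with hW1
  set W2 := R - A F' with hW2
  have hκ0 : 0 ≤ κ₁ := (norm_nonneg B).trans hκ₁
  have hΛ0 : 0 ≤ Λ := (norm_nonneg L).trans hΛ
  have hAeq : A Fte - A F' =
      A u + (2 * Δt) • (L u) + (2 * Δt) • (Qt - Q) + W1 + W2 := by
    rw [hexact, hW1, hW2, hu, hA]
    simp only [ContinuousLinearMap.sub_apply, ContinuousLinearMap.add_apply,
      ContinuousLinearMap.smul_apply, ContinuousLinearMap.id_apply, map_sub, smul_sub]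
    module
  have key : Fte - F' = u + (2 * Δt) • B (L u) + (2 * Δt) • B (Qt - Q) + B W1 + B W2 := by
    have : Fte - F' = B (A Fte - A F') := by rw [map_sub, hB, hB]
    rw [this, hAeq]
    simp only [map_add, map_smul, hB]
  have hBu : ∀ x : E, ‖B x‖ ≤ κ₁ * ‖x‖ := fun x =>
    (B.le_opNorm x).trans (mul_le_mul_of_nonneg_right hκ₁ (norm_nonneg x))
  have h2 : ‖(2 * Δt) • B (L u)‖ ≤ 2 * Δt * (κ₁ * (Λ * ‖u‖)) := by
    rw [norm_smul, Real.norm_eq_abs, abs_of_pos (by linarith)]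
    refine mul_le_mul_of_nonneg_left ?_ (by linarith)
    calc ‖B (L u)‖ ≤ κ₁ * ‖L u‖ := hBu _
      _ ≤ κ₁ * (Λ * ‖u‖) := by
          refine mul_le_mul_of_nonneg_left ?_ hκ0
          exact (L.le_opNorm u).trans (mul_le_mul_of_nonneg_right hΛ (norm_nonneg u))
  have h3 : ‖(2 * Δt) • B (Qt - Q)‖ ≤ 2 * Δt * (κ₁ * ‖Qt - Q‖) := by
    rw [norm_smul, Real.norm_eq_abs, abs_of_pos (by linarith)]
    exact mul_le_mul_of_nonneg_left (hBu _) (by linarith)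
  have h4 : ‖B W1‖ ≤ κ₁ * εb := by
    refine (hBu _).trans (mul_le_mul_of_nonneg_left ?_ hκ0)
    rw [hW1, ← norm_neg]
    simpa using hrec
  have h5 : ‖B W2‖ ≤ κ₁ * εd := by
    refine (hBu _).trans (mul_le_mul_of_nonneg_left ?_ hκ0)
    rw [hW2, ← norm_neg]
    simpa using hsolve
  calc ‖Fte - F'‖ = ‖u + (2 * Δt) • B (L u) + (2 * Δt) • B (Qt - Q) + B W1 + B W2‖ := by
        rw [key]
    _ ≤ ‖u‖ + ‖(2 * Δt) • B (L u)‖ + ‖(2 * Δt) • B (Qt - Q)‖ + ‖B W1‖ + ‖B W2‖ := by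
        refine (norm_add_le _ _).trans ?_
        gcongr
        refine (norm_add_le _ _).trans ?_
        gcongr
        refine (norm_add_le _ _).trans ?_
        gcongr
        exact norm_add_le _ _
    _ ≤ ‖u‖ + 2 * Δt * (κ₁ * (Λ * ‖u‖)) + 2 * Δt * (κ₁ * ‖Qt - Q‖) + κ₁ * εb + κ₁ * εd := by
        gcongr
    _ = ‖u‖ + 2 * Δt * κ₁ * (Λ * ‖u‖ + ‖Qt - Q‖) + κ₁ * (εb + εd) := by ring
end

section
/- Let a : ℕ → ℝ be a sequence of nonnegative reals, and let β ≥ 0 and δ ≥ 0 be such that a(n+1) ≤ a(n−1) + β·(a(n−1) + a(n)) + δ for every n ≥ 1. Then for every n, a(n) ≤ (1 + 2β)ⁿ · (max(a(0), a(1)) + n·δ). -/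
/-- Two-step discrete Gronwall-type inequality used in the global error analysis of
the APTT method: if `a (n+1) ≤ a (n-1) + β (a (n-1) + a n) + δ` for all `n ≥ 1`,
then `a n ≤ (1 + 2β)^n (max (a 0) (a 1) + n δ)`. -/
theorem two_step_gronwall (a : ℕ → ℝ) (β δ : ℝ)
    (ha : ∀ n, 0 ≤ a n) (hβ : 0 ≤ β) (hδ : 0 ≤ δ)
    (hrec : ∀ n : ℕ, 1 ≤ n → a (n + 1) ≤ a (n - 1) + β * (a (n - 1) + a n) + δ) :
    ∀ n : ℕ, a n ≤ (1 + 2 * β) ^ n * (max (a 0) (a 1) + (n : ℝ) * δ) := by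
  have hM0 : 0 ≤ max (a 0) (a 1) := le_trans (ha 0) (le_max_left _ _)
  have hP : (1:ℝ) ≤ 1 + 2 * β := by linarith
  intro n
  induction n using Nat.strong_induction_on with
  | _ n ih =>
    match n with
    | 0 => simp
    | 1 =>
      have h1 : a 1 ≤ max (a 0) (a 1) := le_max_right _ _
      push_cast
      rw [pow_one]
      nlinarith
    | (n+2) =>
      have hn0 := ih n (by omega)
      have hn1 := ih (n+1) (by omega)
      have hrec' := hrec (n+1) (by omega)
      simp only [Nat.add_sub_cancel] at hrec'
      have hpow : (1 + 2*β)^n ≤ (1 + 2*β)^(n+1) :=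
        pow_le_pow_right₀ hP (by omega)
      have hq : max (a 0) (a 1) + (n:ℝ)*δ ≤ max (a 0) (a 1) + ((n+1:ℕ):ℝ)*δ := by
        push_cast; nlinarith
      have hqn : (0:ℝ) ≤ max (a 0) (a 1) + (n:ℝ)*δ := by positivity
      have hx : a n ≤ (1 + 2*β)^(n+1) * (max (a 0) (a 1) + ((n+1:ℕ):ℝ)*δ) :=
        le_trans hn0 (mul_le_mul hpow hq hqn (by positivity))
      set X := (1 + 2*β)^(n+1) * (max (a 0) (a 1) + ((n+1:ℕ):ℝ)*δ) with hX
      have hX0 : 0 ≤ X := le_trans (ha (n+1)) hn1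
      have step : a (n+2) ≤ (1 + 2*β) * X + δ := by nlinarith
      have hdel : δ ≤ (1 + 2*β)^(n+2) * δ := by
        nlinarith [one_le_pow₀ hP (n := n+2)]
      calc a (n+2) ≤ (1 + 2*β) * X + δ := step
        _ = (1 + 2*β)^(n+2) * (max (a 0) (a 1) + ((n+1:ℕ):ℝ)*δ) + δ := by
            rw [hX]; ring
        _ ≤ (1 + 2*β)^(n+2) * (max (a 0) (a 1) + ((n+2:ℕ):ℝ)*δ) := by
            push_cast
            have hp2 : (1:ℝ) ≤ (1 + 2*β)^(n+2) := one_le_pow₀ hP (n := n+2)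
            nlinarith
end

section
/- Let C > 0, ϖ > 0, t⋆ > 0 be real constants. There exists a constant C' > 0, depending only on C, ϖ and t⋆, with the following property: for every Δt with 0 < Δt ≤ 1 and every sequence ε : ℕ → ℝ of nonnegative reals satisfying ε(0) ≤ (Δt)^{1+ϖ}, ε(1) ≤ (Δt)^{1+ϖ}, and ε(n+1) ≤ ε(n−1) + C·Δt·(ε(n−1) + ε(n) + (Δt)^{1+ϖ}) + 2C·(Δt)^{1+ϖ} for all n ≥ 1, one has ε(n) ≤ C'·(Δt)^{ϖ} for every n with n·Δt ≤ t⋆. -/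
/-- Global convergence-rate statement of Theorem 2 of the paper: with tolerances
`ε_b = ε_d = Δt^(1+ϖ)`, the error sequence of the APTT method obeying the two-step
recursion is of order `Δt^ϖ` uniformly on `[0, t⋆]`. -/
theorem aptt_global_rate (C ϖ tstar : ℝ) (hC : 0 < C) (hϖ : 0 < ϖ) (ht : 0 < tstar) :
    ∃ C' : ℝ, 0 < C' ∧
      ∀ Δt : ℝ, 0 < Δt → Δt ≤ 1 →
        ∀ ε : ℕ → ℝ, (∀ n, 0 ≤ ε n) →
          ε 0 ≤ Δt ^ (1 + ϖ) → ε 1 ≤ Δt ^ (1 + ϖ) →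
          (∀ n : ℕ, 1 ≤ n →
            ε (n + 1) ≤ ε (n - 1) + C * Δt * (ε (n - 1) + ε n + Δt ^ (1 + ϖ))
              + 2 * C * Δt ^ (1 + ϖ)) →
          ∀ n : ℕ, (n : ℝ) * Δt ≤ tstar → ε n ≤ C' * Δt ^ ϖ := by
  refine ⟨Real.exp (2 * C * tstar) * (1 + 3 * C * tstar), by positivity, ?_⟩
  intro Δt hΔ hΔ1 ε hε h0 h1 hrec
  set D : ℝ := Δt ^ (1 + ϖ) with hD
  have hDpos : 0 < D := Real.rpow_pos_of_pos hΔ _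
  set P : ℝ := 1 + 2 * C * Δt with hP
  have hP1 : (1 : ℝ) ≤ P := by nlinarith
  have hP0 : (0 : ℝ) < P := lt_of_lt_of_le one_pos hP1
  set v : ℕ → ℝ := fun n => (1 + 3 * C * n) * D * P ^ n with hv
  have hQ1 : ∀ n : ℕ, (1 : ℝ) ≤ P ^ n := fun n => one_le_pow₀ hP1
  have ha1 : ∀ n : ℕ, (1 : ℝ) ≤ 1 + 3 * C * n := by
    intro n
    have : (0 : ℝ) ≤ (n : ℝ) := Nat.cast_nonneg n
    nlinarith
  have hvmono : ∀ n, v n ≤ v (n + 1) := by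
    intro n
    simp only [hv]
    rw [pow_succ]
    push_cast
    have h1n := hQ1 n
    have h2n := ha1 n
    have hQ0 : (0 : ℝ) < P ^ n := pow_pos hP0 n
    nlinarith [mul_pos hDpos hQ0, mul_nonneg (mul_nonneg hDpos.le hQ0.le) (sub_nonneg.2 hP1),
      mul_pos (mul_pos hC hDpos) hQ0]
  have hkey : ∀ n, ε n ≤ v n := by
    intro n
    induction n using Nat.strong_induction_on with
    | _ n ih =>
      match n with
      | 0 =>
        simp only [hv]
        push_cast
        simp only [pow_zero]
        nlinarith
      | 1 =>
        simp only [hv]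
        push_cast
        simp only [pow_one, hP]
        nlinarith [mul_pos hC hDpos, mul_pos (mul_pos hC hΔ) hDpos,
          mul_pos (mul_pos hC hC) (mul_pos hΔ hDpos)]
      | (n + 2) =>
        have hr := hrec (n + 1) (by omega)
        simp only [Nat.add_sub_cancel, show n + 1 + 1 = n + 2 from rfl] at hr
        have hn : ε n ≤ v n := ih n (by omega)
        have hn1 : ε (n + 1) ≤ v (n + 1) := ih (n + 1) (by omega)
        have hn' : ε n ≤ v (n + 1) := le_trans hn (hvmono n)
        obtain ⟨a, ha_def, ha⟩ : ∃ a : ℝ, a = 1 + 3 * C * ((n : ℝ) + 1) ∧ 1 ≤ a := by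
          refine ⟨_, rfl, ?_⟩
          have : (0 : ℝ) ≤ (n : ℝ) := Nat.cast_nonneg n
          nlinarith
        obtain ⟨Q, hQ_def, hQ⟩ : ∃ Q : ℝ, Q = P ^ (n + 1) ∧ 1 ≤ Q := ⟨_, rfl, hQ1 (n + 1)⟩
        have hvn1 : v (n + 1) = a * D * Q := by
          simp only [hv, ha_def, hQ_def]; push_cast; ring
        have hvn2 : v (n + 2) = a * D * Q + 2 * C * Δt * (a * D * Q) + 3 * C * D * Q
            + 6 * C ^ 2 * Δt * D * Q := by
          simp only [hv, ha_def, hQ_def, hP]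
          push_cast
          ring
        rw [hvn2]
        rw [hvn1] at hn1 hn'
        have hCΔ : (0 : ℝ) ≤ C * Δt := by positivity
        nlinarith [mul_nonneg hCΔ (sub_nonneg.2 hn'), mul_nonneg hCΔ (sub_nonneg.2 hn1),
          mul_nonneg (by positivity : (0:ℝ) ≤ 3 * C * D) (sub_nonneg.2 hQ),
          mul_nonneg (mul_nonneg hC.le hDpos.le) (sub_nonneg.2 hΔ1),
          mul_nonneg (by positivity : (0:ℝ) ≤ 6 * C ^ 2 * Δt * D) (le_trans zero_le_one hQ)]
  intro n hn
  have hvbound : v n ≤ Real.exp (2 * C * tstar) * (1 + 3 * C * tstar) * Δt ^ ϖ := by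
    have hPexp : P ≤ Real.exp (2 * C * Δt) := by
      have := Real.add_one_le_exp (2 * C * Δt)
      simp only [hP]; linarith
    have hPn : P ^ n ≤ Real.exp (2 * C * tstar) := by
      calc P ^ n ≤ (Real.exp (2 * C * Δt)) ^ n := pow_le_pow_left₀ hP0.le hPexp n
        _ = Real.exp (n * (2 * C * Δt)) := by rw [← Real.exp_nat_mul]
        _ ≤ Real.exp (2 * C * tstar) := by
            apply Real.exp_le_exp.2
            have : (n : ℝ) * (2 * C * Δt) = 2 * C * ((n : ℝ) * Δt) := by ring
            rw [this]
            nlinarith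
    have hDsplit : D = Δt * Δt ^ ϖ := by
      rw [hD, Real.rpow_add hΔ, Real.rpow_one]
    have hϖp : 0 < Δt ^ ϖ := Real.rpow_pos_of_pos hΔ _
    have hfac : (1 + 3 * C * n) * D ≤ (1 + 3 * C * tstar) * Δt ^ ϖ := by
      rw [hDsplit]
      have hnn : (0 : ℝ) ≤ (n : ℝ) := Nat.cast_nonneg n
      nlinarith [mul_le_mul_of_nonneg_left hn (by positivity : (0:ℝ) ≤ 3 * C * Δt ^ ϖ),
        mul_le_mul_of_nonneg_right hΔ1 hϖp.le]
    have h1 : (0 : ℝ) ≤ (1 + 3 * C * n) * D :=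
      le_of_lt (mul_pos (lt_of_lt_of_le one_pos (ha1 n)) hDpos)
    calc v n = (1 + 3 * C * n) * D * P ^ n := rfl
      _ ≤ (1 + 3 * C * tstar) * Δt ^ ϖ * Real.exp (2 * C * tstar) := by
          apply mul_le_mul hfac hPn (le_trans zero_le_one (hQ1 n))
          positivity
      _ = Real.exp (2 * C * tstar) * (1 + 3 * C * tstar) * Δt ^ ϖ := by ring
  exact le_trans (hkey n) hvbound
end

section
/- Let ι be a finite type, let ρ₀ > 0 and ρ̲ > 0, and let g, g̃, ρ, ρ̃ : ι → ℝ satisfy ρ(k) ≥ ρ₀ and ρ̃(k) ≥ ρ̲ for all k. Then √(Σ_k (g̃(k)/ρ̃(k) − g(k)/ρ(k))²) ≤ (max_k |g̃(k)| / (ρ̲·ρ₀)) · √(Σ_k (ρ̃(k) − ρ(k))²) + (1/ρ₀) · √(Σ_k (g̃(k) − g(k))²). -/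
open scoped BigOperators

/-- Minkowski-style helper: the ℓ² norm of a pointwise sum. -/
lemma sqrt_sum_sq_add_le {ι : Type*} [Fintype ι] (u v : ι → ℝ) :
    Real.sqrt (∑ k, (u k + v k) ^ 2)
      ≤ Real.sqrt (∑ k, (u k) ^ 2) + Real.sqrt (∑ k, (v k) ^ 2) := by
  let U : EuclideanSpace ℝ ι := WithLp.toLp 2 u
  let V : EuclideanSpace ℝ ι := WithLp.toLp 2 v
  have hU : ‖U‖ = Real.sqrt (∑ k, (u k) ^ 2) := by
    rw [EuclideanSpace.norm_eq]
    simp [U, Real.norm_eq_abs, sq_abs]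
  have hV : ‖V‖ = Real.sqrt (∑ k, (v k) ^ 2) := by
    rw [EuclideanSpace.norm_eq]
    simp [V, Real.norm_eq_abs, sq_abs]
  have hUV : ‖U + V‖ = Real.sqrt (∑ k, (u k + v k) ^ 2) := by
    rw [EuclideanSpace.norm_eq]
    simp [U, V, Real.norm_eq_abs, sq_abs]
  calc Real.sqrt (∑ k, (u k + v k) ^ 2) = ‖U + V‖ := hUV.symm
    _ ≤ ‖U‖ + ‖V‖ := norm_add_le _ _
    _ = _ := by rw [hU, hV]

lemma sqrt_sum_sq_mono {ι : Type*} [Fintype ι] (u v : ι → ℝ)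
    (h : ∀ k, |u k| ≤ v k) :
    Real.sqrt (∑ k, (u k) ^ 2) ≤ Real.sqrt (∑ k, (v k) ^ 2) := by
  apply Real.sqrt_le_sqrt
  apply Finset.sum_le_sum
  intro k _
  calc (u k) ^ 2 = |u k| ^ 2 := (sq_abs _).symm
    _ ≤ (v k) ^ 2 := by
        have := h k
        have h0 : (0:ℝ) ≤ |u k| := abs_nonneg _
        nlinarith

lemma sqrt_sum_sq_smul {ι : Type*} [Fintype ι] (c : ℝ) (hc : 0 ≤ c) (u : ι → ℝ) :
    Real.sqrt (∑ k, (c * u k) ^ 2) = c * Real.sqrt (∑ k, (u k) ^ 2) := by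
  have : ∑ k, (c * u k) ^ 2 = c ^ 2 * ∑ k, (u k) ^ 2 := by
    rw [Finset.mul_sum]; congr 1; ext k; ring
  rw [this, Real.sqrt_mul (by positivity), Real.sqrt_sq hc]

/-- Stability estimate for the discrete mean velocity `U = (ρ⊙U)/ρ` used in the
proof of Theorem 1 of the paper. -/
theorem mean_velocity_stability {ι : Type*} [Fintype ι] [Nonempty ι]
    (ρ₀ ρlo : ℝ) (hρ₀ : 0 < ρ₀) (hρlo : 0 < ρlo)
    (g gt ρ ρt : ι → ℝ)
    (hρ : ∀ k, ρ₀ ≤ ρ k) (hρt : ∀ k, ρlo ≤ ρt k) :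
    Real.sqrt (∑ k, (gt k / ρt k - g k / ρ k) ^ 2)
      ≤ ((⨆ k, |gt k|) / (ρlo * ρ₀)) * Real.sqrt (∑ k, (ρt k - ρ k) ^ 2)
        + (1 / ρ₀) * Real.sqrt (∑ k, (gt k - g k) ^ 2) := by
  set M := ⨆ k, |gt k| with hMdef
  have hbdd : BddAbove (Set.range fun k => |gt k|) :=
    (Set.finite_range _).bddAbove
  have hMk : ∀ k, |gt k| ≤ M := fun k => le_ciSup hbdd k
  have hMnn : 0 ≤ M := le_trans (abs_nonneg _) (hMk (Classical.arbitrary ι))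
  have hptwise : ∀ k, |gt k / ρt k - g k / ρ k|
      ≤ M / (ρlo * ρ₀) * |ρt k - ρ k| + 1 / ρ₀ * |gt k - g k| := by
    intro k
    have h1 : (0:ℝ) < ρ k := lt_of_lt_of_le hρ₀ (hρ k)
    have h2 : (0:ℝ) < ρt k := lt_of_lt_of_le hρlo (hρt k)
    have heq : gt k / ρt k - g k / ρ k
        = gt k * (ρ k - ρt k) / (ρt k * ρ k) + (gt k - g k) / ρ k := by
      field_simp
      ring
    rw [heq]
    calc |gt k * (ρ k - ρt k) / (ρt k * ρ k) + (gt k - g k) / ρ k|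
        ≤ |gt k * (ρ k - ρt k) / (ρt k * ρ k)| + |(gt k - g k) / ρ k| :=
          abs_add_le _ _
      _ = |gt k| * |ρ k - ρt k| / (ρt k * ρ k) + |gt k - g k| / ρ k := by
          rw [abs_div, abs_mul, abs_of_pos (by positivity : (0:ℝ) < ρt k * ρ k),
            abs_div, abs_of_pos h1]
      _ ≤ M * |ρt k - ρ k| / (ρlo * ρ₀) + |gt k - g k| / ρ₀ := by
          rw [abs_sub_comm (ρ k)]
          gcongr
          · exact hMk k
          · exact hρt k
          · exact hρ k
          · exact hρ k
      _ = M / (ρlo * ρ₀) * |ρt k - ρ k| + 1 / ρ₀ * |gt k - g k| := by ring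
  calc Real.sqrt (∑ k, (gt k / ρt k - g k / ρ k) ^ 2)
      ≤ Real.sqrt (∑ k, (M / (ρlo * ρ₀) * |ρt k - ρ k| + 1 / ρ₀ * |gt k - g k|) ^ 2) :=
        sqrt_sum_sq_mono _ _ hptwise
    _ ≤ Real.sqrt (∑ k, (M / (ρlo * ρ₀) * |ρt k - ρ k|) ^ 2)
          + Real.sqrt (∑ k, (1 / ρ₀ * |gt k - g k|) ^ 2) :=
        sqrt_sum_sq_add_le _ _
    _ = M / (ρlo * ρ₀) * Real.sqrt (∑ k, |ρt k - ρ k| ^ 2)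
          + 1 / ρ₀ * Real.sqrt (∑ k, |gt k - g k| ^ 2) := by
        rw [sqrt_sum_sq_smul _ (by positivity), sqrt_sum_sq_smul _ (by positivity)]
    _ = M / (ρlo * ρ₀) * Real.sqrt (∑ k, (ρt k - ρ k) ^ 2)
          + 1 / ρ₀ * Real.sqrt (∑ k, (gt k - g k) ^ 2) := by
        simp [sq_abs]
end

section
/- Let α and β be finite types, let 𝕃 be a linear endomorphism of the space of functions (α × β) → ℝ such that for every G : (α × β) → ℝ and every l ∈ β, Σ_{k ∈ α} (𝕃G)(k, l) = 0. Let φ : β → ℝ, let Δt ∈ ℝ, and let Q : (α × β) → ℝ satisfy Σ_{l ∈ β} Q(k, l)·φ(l) = 0 for every k ∈ α. If F, F' : (α × β) → ℝ satisfy F' − Δt·(𝕃F') = F + Δt·(𝕃F) + 2Δt·Q, then Σ_{k, l} F'(k, l)·φ(l) = Σ_{k, l} F(k, l)·φ(l). -/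
open scoped BigOperators

/-- Abstract form of the exact discrete conservation laws (Theorem 3) for one step
of the Crank–Nicolson Leap-Frog scheme `(I − Δt𝕃)F' = (I + Δt𝕃)F + 2ΔtQ`:
if the discrete transport operator `𝕃` has vanishing spatial sums and the discrete
collision term `Q` annihilates the collision invariant `φ`, then the discrete
moment `Σ F φ` is conserved. -/
theorem cnlf_conservation {α β : Type*} [Fintype α] [Fintype β]
    (𝕃 : ((α × β) → ℝ) →ₗ[ℝ] ((α × β) → ℝ))
    (h𝕃 : ∀ G : (α × β) → ℝ, ∀ l : β, ∑ k : α, (𝕃 G) (k, l) = 0)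
    (φ : β → ℝ) (Δt : ℝ) (Q : (α × β) → ℝ)
    (hQ : ∀ k : α, ∑ l : β, Q (k, l) * φ l = 0)
    (F F' : (α × β) → ℝ)
    (hstep : F' - Δt • 𝕃 F' = F + Δt • 𝕃 F + (2 * Δt) • Q) :
    ∑ p : α × β, F' p * φ p.2 = ∑ p : α × β, F p * φ p.2 := by
  have hL : ∀ G : (α × β) → ℝ, ∑ p : α × β, (𝕃 G) p * φ p.2 = 0 := by
    intro G
    rw [Fintype.sum_prod_type, Finset.sum_comm]
    simp only [← Finset.sum_mul]
    simp [h𝕃 G]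
  have hQsum : ∑ p : α × β, Q p * φ p.2 = 0 := by
    rw [Fintype.sum_prod_type]
    simp [hQ]
  have h := congrArg (fun G : (α × β) → ℝ => ∑ p : α × β, G p * φ p.2) hstep
  simp only [Pi.sub_apply, Pi.add_apply, Pi.smul_apply, smul_eq_mul, sub_mul, add_mul,
    Finset.sum_sub_distrib, Finset.sum_add_distrib, mul_assoc, ← Finset.mul_sum,
    hL, hQsum, mul_zero, sub_zero, add_zero] at h
  exact h
end
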